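/- Let K, φ, α, Q̄ > 0 and define h₁(x) = (K/Q̄²)·x³/(1−x)² − φx + α(1−x)·Q̄ on [0,1). Then h₁'(x) = (K/Q̄²)·(2y³ + 3y²) − (φ + αQ̄) where y = x/(1−x), and h₁ has a unique critical point x₀* ∈ (0,1) characterized by 2y*³ + 3y*² = (φ + αQ̄)·Q̄²/K with y* = x₀*/(1−x₀*), at which h₁ attains its minimum on [0,1). -/

import Mathlib

set_option maxHeartbeats 1000000


theorem stmt8 (K φ α Q : ℝ) (hK : 0 < K) (hφ : 0 < φ) (hα : 0 < α) (hQ : 0 < Q) :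
    (∀ x ∈ Set.Ico (0:ℝ) 1,
      HasDerivAt (fun x : ℝ => K / Q ^ 2 * (x ^ 3 / (1 - x) ^ 2) - φ * x + α * (1 - x) * Q)
        (K / Q ^ 2 * (2 * (x / (1 - x)) ^ 3 + 3 * (x / (1 - x)) ^ 2) - (φ + α * Q)) x) ∧
    ∃! x₀ : ℝ, x₀ ∈ Set.Ioo (0:ℝ) 1 ∧
      2 * (x₀ / (1 - x₀)) ^ 3 + 3 * (x₀ / (1 - x₀)) ^ 2 = (φ + α * Q) * Q ^ 2 / K ∧
      ∀ x ∈ Set.Ico (0:ℝ) 1,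
        K / Q ^ 2 * (x₀ ^ 3 / (1 - x₀) ^ 2) - φ * x₀ + α * (1 - x₀) * Q ≤
        K / Q ^ 2 * (x ^ 3 / (1 - x) ^ 2) - φ * x + α * (1 - x) * Q := by
  have hQ2 : (0:ℝ) < Q ^ 2 := by positivity
  set c : ℝ := (φ + α * Q) * Q ^ 2 / K with hc
  have hcpos : 0 < c := by positivity
  have hCc : K / Q ^ 2 * c = φ + α * Q := by
    rw [hc]
    field_simp
  -- derivative lemma
  have hderiv : ∀ x : ℝ, x < 1 →
      HasDerivAt (fun x : ℝ => K / Q ^ 2 * (x ^ 3 / (1 - x) ^ 2) - φ * x + α * (1 - x) * Q)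
        (K / Q ^ 2 * (2 * (x / (1 - x)) ^ 3 + 3 * (x / (1 - x)) ^ 2) - (φ + α * Q)) x := by
    intro x hx
    have h1x : (1 : ℝ) - x ≠ 0 := by intro h; linarith [sub_pos.mpr hx]
    have hne : ((1 : ℝ) - x) ^ 2 ≠ 0 := pow_ne_zero _ h1x
    have h1 : HasDerivAt (fun x : ℝ => x ^ 3) (3 * x ^ 2) x := by
      simpa using hasDerivAt_pow 3 x
    have h2 : HasDerivAt (fun x : ℝ => ((1:ℝ) - x) ^ 2)
        ((2 : ℕ) * ((1:ℝ) - x) ^ 1 * (0 - 1)) x :=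
      ((hasDerivAt_const x (1:ℝ)).sub (hasDerivAt_id x)).pow 2
    have hdiv := (h1.div h2 hne).const_mul (K / Q ^ 2)
    have hlin : HasDerivAt (fun x : ℝ => φ * x) φ x := by
      simpa using (hasDerivAt_id x).const_mul φ
    have hlast : HasDerivAt (fun x : ℝ => α * (1 - x) * Q) (-(α * Q)) x := by
      have : HasDerivAt (fun x : ℝ => α * (1 - x) * Q) (α * (0 - 1) * Q) x := by
        exact (((hasDerivAt_const x (1:ℝ)).sub (hasDerivAt_id x)).const_mul α).mul_const Q
      simpa using this
    have := (hdiv.sub hlin).add hlast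
    refine this.congr_deriv ?_
    push_cast
    field_simp
    ring
  -- g strict mono on [0, ∞)
  have gmono : StrictMonoOn (fun y : ℝ => 2 * y ^ 3 + 3 * y ^ 2) (Set.Ici 0) := by
    intro a ha b hb hab
    simp only [Set.mem_Ici] at ha hb
    simp only
    nlinarith [sq_nonneg (a+b), sq_nonneg (b-a), mul_nonneg ha hb, mul_pos (sub_pos.mpr hab) (sub_pos.mpr hab)]
  -- find y with g y = c via IVT
  have hcont : ContinuousOn (fun y : ℝ => 2 * y ^ 3 + 3 * y ^ 2) (Set.Icc 0 (c + 1)) := by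
    fun_prop
  have hmem : c ∈ Set.Icc ((fun y : ℝ => 2 * y ^ 3 + 3 * y ^ 2) 0)
      ((fun y : ℝ => 2 * y ^ 3 + 3 * y ^ 2) (c + 1)) := by
    constructor <;> [skip; skip] <;> simp <;> nlinarith
  obtain ⟨y, hyI, hgy'⟩ := intermediate_value_Icc (by linarith : (0:ℝ) ≤ c + 1) hcont hmem
  have hgy : 2 * y ^ 3 + 3 * y ^ 2 = c := hgy'
  have hy0 : 0 < y := by
    rcases lt_or_eq_of_le hyI.1 with h | h
    · exact h
    · exfalso; rw [← h] at hgy; norm_num at hgy; linarith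
  have h1y : (0:ℝ) < 1 + y := by linarith
  set x₀ : ℝ := y / (1 + y) with hx₀def
  have hx₀pos : 0 < x₀ := by positivity
  have hx₀lt : x₀ < 1 := by
    rw [hx₀def, div_lt_one h1y]; linarith
  have h1mx₀ : 1 - x₀ = 1 / (1 + y) := by
    rw [hx₀def]; field_simp; ring
  have hratio : x₀ / (1 - x₀) = y := by
    rw [h1mx₀, hx₀def]; field_simp
  -- strict mono of x ↦ x/(1-x) on [0,1)
  have rmono : ∀ a b : ℝ, 0 ≤ a → a < b → b < 1 → a / (1 - a) < b / (1 - b) := by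
    intro a b ha hab hb1
    have h1a : 0 < 1 - a := by linarith
    have h1b : 0 < 1 - b := by linarith
    rw [div_lt_div_iff₀ h1a h1b]
    nlinarith
  -- sign of derivative
  have hdsign_neg : ∀ x : ℝ, 0 ≤ x → x < x₀ →
      K / Q ^ 2 * (2 * (x / (1 - x)) ^ 3 + 3 * (x / (1 - x)) ^ 2) - (φ + α * Q) < 0 := by
    intro x hx0 hxlt
    have hrx : x / (1 - x) < y := by rw [← hratio]; exact rmono x x₀ hx0 hxlt hx₀lt
    have hrx0 : 0 ≤ x / (1 - x) := by
      have : 0 < 1 - x := by linarith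
      positivity
    have := gmono (Set.mem_Ici.mpr hrx0) (Set.mem_Ici.mpr (le_of_lt hy0)) hrx
    simp only at this
    rw [hgy] at this
    rw [← hCc]
    have hC : 0 < K / Q ^ 2 := by positivity
    nlinarith
  have hdsign_pos : ∀ x : ℝ, x₀ < x → x < 1 →
      0 < K / Q ^ 2 * (2 * (x / (1 - x)) ^ 3 + 3 * (x / (1 - x)) ^ 2) - (φ + α * Q) := by
    intro x hxlt hx1
    have hrx : y < x / (1 - x) := by
      rw [← hratio]; exact rmono x₀ x (le_of_lt hx₀pos) hxlt hx1
    have hrx0 : 0 ≤ x / (1 - x) := by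
      have h1 : 0 < 1 - x := by linarith
      have h0 : 0 ≤ x := by linarith
      positivity
    have := gmono (Set.mem_Ici.mpr (le_of_lt hy0)) (Set.mem_Ici.mpr hrx0) hrx
    simp only at this
    rw [hgy] at this
    rw [← hCc]
    have hC : 0 < K / Q ^ 2 := by positivity
    nlinarith
  set f : ℝ → ℝ := fun x : ℝ => K / Q ^ 2 * (x ^ 3 / (1 - x) ^ 2) - φ * x + α * (1 - x) * Q
    with hf
  -- antitone on [0, x₀]
  have hanti : StrictAntiOn f (Set.Icc 0 x₀) := by
    apply strictAntiOn_of_deriv_neg (convex_Icc _ _)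
    · intro x hx
      exact (hderiv x (by linarith [hx.2] : x < 1)).continuousAt.continuousWithinAt
    · intro x hx
      rw [interior_Icc] at hx
      rw [(hderiv x (by linarith [hx.2])).deriv]
      exact hdsign_neg x (le_of_lt hx.1) hx.2
  have hmono : StrictMonoOn f (Set.Ico x₀ 1) := by
    apply strictMonoOn_of_deriv_pos (convex_Ico _ _)
    · intro x hx
      exact (hderiv x hx.2).continuousAt.continuousWithinAt
    · intro x hx
      rw [interior_Ico] at hx
      rw [(hderiv x hx.2).deriv]
      exact hdsign_pos x hx.1 hx.2
  have hmin : ∀ x ∈ Set.Ico (0:ℝ) 1, f x₀ ≤ f x := by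
    intro x hx
    rcases le_or_gt x x₀ with h | h
    · exact hanti.antitoneOn ⟨hx.1, h⟩ ⟨le_of_lt hx₀pos, le_refl _⟩ h
    · exact le_of_lt (hmono ⟨le_refl _, hx₀lt⟩ ⟨le_of_lt h, hx.2⟩ h)
  refine ⟨fun x hx => hderiv x hx.2, x₀, ⟨⟨hx₀pos, hx₀lt⟩, by rw [hratio]; exact hgy, hmin⟩, ?_⟩
  -- uniqueness
  rintro x₁ ⟨⟨hx₁0, hx₁1⟩, heq, -⟩
  have h1x₁ : 0 < 1 - x₁ := by linarith
  have hr₁ : 0 ≤ x₁ / (1 - x₁) := by positivity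
  have : x₁ / (1 - x₁) = y := by
    apply gmono.injOn (Set.mem_Ici.mpr hr₁) (Set.mem_Ici.mpr (le_of_lt hy0))
    simp only
    rw [heq, hgy]
  have hx₁eq : x₁ = y * (1 - x₁) := by
    field_simp at this
    linarith [this]
  rw [hx₀def]
  rw [eq_div_iff (ne_of_gt h1y)]
  nlinarith [hx₁eq]
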